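/- If A ∈ Mₙ(ℝ) is real substochastic (all row sums and column sums of |a_{ij}| are at most 1), then ‖Ay‖ ≤ ‖y‖ for every y ∈ ℝⁿ and every symmetric norm ‖·‖ on ℝⁿ. -/

import Mathlib

open Finset

/-- The symmetric matrix `Θ_x`: off-diagonal entries `(xᵢ+xⱼ)/(2n)`, diagonal chosen
so that every row sums to zero. -/
noncomputable def Theta (n : ℕ) (x : Fin n → ℝ) : Matrix (Fin n) (Fin n) ℝ :=
  fun i j =>
    if i = j then -(∑ k ∈ Finset.univ.erase i, (x i + x k) / (2 * n))
    else (x i + x j) / (2 * n)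

/-- `I_x = Iₙ + Θ_x`. -/
noncomputable def Imat (n : ℕ) (x : Fin n → ℝ) : Matrix (Fin n) (Fin n) ℝ :=
  1 + Theta n x

/-- `E f`: the constant vector whose entries all equal the mean of `f`. -/
noncomputable def meanVec (n : ℕ) (f : Fin n → ℝ) : Fin n → ℝ :=
  fun _ => (∑ i, f i) / n

/-- The sup norm `‖x‖_∞`. -/
noncomputable def linf (n : ℕ) (x : Fin n → ℝ) : ℝ :=
  sSup (Set.range fun i => |x i|)

/-- The Ky Fan `k`-norm: the sum of the `k` largest absolute values of the entries,
i.e. the maximum of `∑_{i ∈ S} |xᵢ|` over subsets `S` of cardinality `k`. -/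
noncomputable def kyFan (n k : ℕ) (x : Fin n → ℝ) : ℝ :=
  sSup ((fun S : Finset (Fin n) => ∑ i ∈ S, |x i|) '' {S | S.card = k})

/-- The dual Ky Fan `k`-norm: `max(‖x‖_∞, ‖x‖₁ / k)`. -/
noncomputable def kyFanDual (n k : ℕ) (x : Fin n → ℝ) : ℝ :=
  max (linf n x) ((∑ i, |x i|) / k)

/-- A symmetric norm on `ℝⁿ`: a norm invariant under coordinate permutations
and sign changes. -/
structure IsSymmNorm (n : ℕ) (N : (Fin n → ℝ) → ℝ) : Prop where
  add_le : ∀ x y, N (x + y) ≤ N x + N y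
  smul : ∀ (c : ℝ) (x), N (c • x) = |c| * N x
  pos : ∀ x, x ≠ 0 → 0 < N x
  perm : ∀ (σ : Equiv.Perm (Fin n)) (x), N (x ∘ σ) = N x
  sign : ∀ (ε x : Fin n → ℝ), (∀ i, ε i = 1 ∨ ε i = -1) → N (ε * x) = N x


section AuxSymmNorm

variable {n : ℕ} {N : (Fin n → ℝ) → ℝ}

lemma symm_abs_eq (hN : IsSymmNorm n N) {x z : Fin n → ℝ}
    (h : ∀ i, |x i| = |z i|) : N x = N z := by
  have : x = (fun i => if z i = 0 then 1 else x i / z i) * z := by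
    funext i
    by_cases hz : z i = 0
    · have : |x i| = 0 := by rw [h i, hz, abs_zero]
      simp [hz, abs_eq_zero.mp this]
    · simp [hz, div_mul_cancel₀ _ hz]
  rw [this]
  apply hN.sign
  intro i
  by_cases hz : z i = 0
  · simp [hz]
  · rcases (abs_eq_abs.mp (h i)) with h1 | h1
    · left; simp [hz, h1, div_self hz]
    · right; simp [hz, h1, neg_div, div_self hz]

lemma symm_update (hN : IsSymmNorm n N) (x : Fin n → ℝ) (i : Fin n) {t : ℝ}
    (ht : |t| ≤ 1) : N (Function.update x i (t * x i)) ≤ N x := by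
  have h1 : (-1 : ℝ) ≤ t := neg_le_of_abs_le ht
  have h2 : t ≤ 1 := le_of_abs_le ht
  set x' : Fin n → ℝ := (fun j => if j = i then -1 else 1) * x with hx'
  have hNx' : N x' = N x := by
    apply hN.sign; intro j; by_cases hj : j = i <;> simp [hj]
  have key : Function.update x i (t * x i)
      = ((1 + t) / 2) • x + ((1 - t) / 2) • x' := by
    funext j
    by_cases hj : j = i
    · subst hj; simp [Function.update_self, hx']; ring
    · simp [Function.update_of_ne hj, hx', hj]; ring
  rw [key]
  calc N (((1 + t) / 2) • x + ((1 - t) / 2) • x')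
      ≤ N (((1 + t) / 2) • x) + N (((1 - t) / 2) • x') := hN.add_le _ _
    _ = ((1 + t) / 2) * N x + ((1 - t) / 2) * N x := by
        rw [hN.smul, hN.smul, hNx', abs_of_nonneg (by linarith), abs_of_nonneg (by linarith)]
    _ = N x := by ring

lemma symm_mono (hN : IsSymmNorm n N) {x z : Fin n → ℝ}
    (h : ∀ i, |x i| ≤ |z i|) : N x ≤ N z := by
  have claim : ∀ s : Finset (Fin n), N (fun j => if j ∈ s then x j else z j) ≤ N z := by
    intro s
    induction s using Finset.induction_on with
    | empty => simp
    | @insert a s ha ih =>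
      set f : Fin n → ℝ := fun j => if j ∈ s then x j else z j with hf
      set t : ℝ := if z a = 0 then 0 else x a / z a with htdef
      have hfa : f a = z a := by simp [hf, ha]
      have ht : |t| ≤ 1 := by
        by_cases hz : z a = 0
        · simp [htdef, hz]
        · rw [htdef, if_neg hz, abs_div]
          exact div_le_one_of_le₀ (h a) (abs_nonneg _)
      have hxa : x a = t * z a := by
        by_cases hz : z a = 0
        · have h0 : |x a| ≤ 0 := by simpa [hz] using h a
          have h0' : x a = 0 := abs_nonpos_iff.mp h0
          simp [h0', htdef, hz]
        · rw [htdef, if_neg hz, div_mul_cancel₀ _ hz]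
      have hg : (fun j => if j ∈ insert a s then x j else z j)
          = Function.update f a (t * f a) := by
        funext j
        by_cases hj : j = a
        · subst hj; rw [Function.update_self, hfa, ← hxa]; simp
        · rw [Function.update_of_ne hj]; simp [hf, hj]
      rw [hg]
      exact le_trans (symm_update hN f a ht) ih
  simpa using claim Finset.univ

lemma permMatrix_mulVec_eq (σ : Equiv.Perm (Fin n)) (z : Fin n → ℝ) :
    (σ.permMatrix ℝ).mulVec z = z ∘ σ := by
  funext i
  simp [Matrix.mulVec, dotProduct, Equiv.Perm.permMatrix, PEquiv.toMatrix,
    Equiv.toPEquiv]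

end AuxSymmNorm

/-- Calderón–Mityagin: a real substochastic matrix is a contraction for every
symmetric norm on `ℝⁿ`. -/
theorem stmt_2 (n : ℕ) (A : Matrix (Fin n) (Fin n) ℝ)
    (hcol : ∀ j, ∑ i, |A i j| ≤ 1) (hrow : ∀ i, ∑ j, |A i j| ≤ 1)
    (N : (Fin n → ℝ) → ℝ) (hN : IsSymmNorm n N) (y : Fin n → ℝ) :
    N (A.mulVec y) ≤ N y := by
  classical
  set B : Matrix (Fin n) (Fin n) ℝ := fun i j => |A i j| with hB
  set z : Fin n → ℝ := fun i => |y i| with hz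
  have hBnn : ∀ i j, 0 ≤ B i j := fun i j => abs_nonneg _
  have hznn : ∀ i, 0 ≤ z i := fun i => abs_nonneg _
  have hNzy : N z = N y := symm_abs_eq hN (fun i => by simp [hz, abs_abs])
  have hBz_nn : ∀ i, 0 ≤ B.mulVec z i := fun i => by
    simpa [Matrix.mulVec, dotProduct] using
      Finset.sum_nonneg fun j (_ : j ∈ Finset.univ) => mul_nonneg (hBnn i j) (hznn j)
  have step1 : N (A.mulVec y) ≤ N (B.mulVec z) := by
    apply symm_mono hN
    intro i
    rw [abs_of_nonneg (hBz_nn i)]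
    calc |A.mulVec y i| ≤ ∑ j, |A i j * y j| := by
          simpa [Matrix.mulVec, dotProduct] using
            Finset.abs_sum_le_sum_abs (fun j => A i j * y j) Finset.univ
      _ = B.mulVec z i := by simp [Matrix.mulVec, dotProduct, hB, hz, abs_mul]
  -- construct a dominating doubly stochastic matrix
  obtain ⟨S, hS, hBS⟩ : ∃ S ∈ doublyStochastic ℝ (Fin n), ∀ i j, B i j ≤ S i j := by
    set u : Fin n → ℝ := fun i => 1 - ∑ j, B i j with hu
    set v : Fin n → ℝ := fun j => 1 - ∑ i, B i j with hv
    have hun : ∀ i, 0 ≤ u i := fun i => sub_nonneg.mpr (hrow i)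
    have hvn : ∀ j, 0 ≤ v j := fun j => sub_nonneg.mpr (hcol j)
    set c : ℝ := ∑ i, u i with hc
    have hvc : ∑ j, v j = c := by
      simp only [hc, hu, hv, Finset.sum_sub_distrib]
      rw [Finset.sum_comm]
    by_cases hc0 : c = 0
    · refine ⟨B, ?_, fun i j => le_refl _⟩
      rw [mem_doublyStochastic_iff_sum]
      refine ⟨hBnn, fun i => ?_, fun j => ?_⟩
      · have : u i = 0 :=
          (Finset.sum_eq_zero_iff_of_nonneg (fun i _ => hun i)).mp hc0 i (Finset.mem_univ i)
        have := this
        simp only [hu] at this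
        linarith
      · have hvz : ∑ j, v j = 0 := by rw [hvc, hc0]
        have : v j = 0 :=
          (Finset.sum_eq_zero_iff_of_nonneg (fun j _ => hvn j)).mp hvz j (Finset.mem_univ j)
        simp only [hv] at this
        linarith
    · have hcpos : 0 < c :=
        lt_of_le_of_ne (Finset.sum_nonneg fun i _ => hun i) (Ne.symm hc0)
      refine ⟨fun i j => B i j + u i * v j / c, ?_, fun i j =>
        le_add_of_nonneg_right (div_nonneg (mul_nonneg (hun i) (hvn j)) hcpos.le)⟩
      refine mem_doublyStochastic_iff_sum.mpr ?_
      refine ⟨fun i j => add_nonneg (hBnn i j)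
        (div_nonneg (mul_nonneg (hun i) (hvn j)) hcpos.le), fun i => ?_, fun j => ?_⟩
      · have h1 : ∑ j, u i * v j / c = u i := by
          rw [← Finset.sum_div, ← Finset.mul_sum, hvc, mul_div_assoc, div_self hc0, mul_one]
        rw [Finset.sum_add_distrib, h1]
        have : ∑ j, B i j = 1 - u i := by simp [hu]
        rw [this]; ring
      · have h1 : ∑ i, u i * v j / c = v j := by
          rw [← Finset.sum_div, ← Finset.sum_mul, ← hc, mul_comm, mul_div_assoc, div_self hc0,
            mul_one]
        rw [Finset.sum_add_distrib, h1]
        have : ∑ i, B i j = 1 - v j := by simp [hv]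
        rw [this]; ring
  have hSnn : ∀ i j, 0 ≤ S i j := fun i j => nonneg_of_mem_doublyStochastic hS
  have hSz_nn : ∀ i, 0 ≤ S.mulVec z i := fun i => by
    simpa [Matrix.mulVec, dotProduct] using
      Finset.sum_nonneg fun j (_ : j ∈ Finset.univ) => mul_nonneg (hSnn i j) (hznn j)
  have step2 : N (B.mulVec z) ≤ N (S.mulVec z) := by
    apply symm_mono hN
    intro i
    rw [abs_of_nonneg (hBz_nn i), abs_of_nonneg (hSz_nn i)]
    simpa [Matrix.mulVec, dotProduct] using
      Finset.sum_le_sum fun j (_ : j ∈ Finset.univ) =>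
        mul_le_mul_of_nonneg_right (hBS i j) (hznn j)
  have step3 : N (S.mulVec z) ≤ N z := by
    have hconv : Convex ℝ {M : Matrix (Fin n) (Fin n) ℝ | N (M.mulVec z) ≤ N z} := by
      intro M₁ h1 M₂ h2 a b ha hb hab
      show N ((a • M₁ + b • M₂).mulVec z) ≤ N z
      rw [Matrix.add_mulVec, Matrix.smul_mulVec, Matrix.smul_mulVec]
      calc N (a • M₁.mulVec z + b • M₂.mulVec z)
          ≤ N (a • M₁.mulVec z) + N (b • M₂.mulVec z) := hN.add_le _ _
        _ = a * N (M₁.mulVec z) + b * N (M₂.mulVec z) := by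
            rw [hN.smul, hN.smul, abs_of_nonneg ha, abs_of_nonneg hb]
        _ ≤ a * N z + b * N z := by
            gcongr
            exacts [h1, h2]
        _ = N z := by rw [← add_mul, hab, one_mul]
    have hsub : {M | ∃ σ : Equiv.Perm (Fin n), σ.permMatrix ℝ = M}
        ⊆ {M : Matrix (Fin n) (Fin n) ℝ | N (M.mulVec z) ≤ N z} := by
      rintro M ⟨σ, rfl⟩
      show N ((σ.permMatrix ℝ).mulVec z) ≤ N z
      rw [permMatrix_mulVec_eq, hN.perm]
    have hS' : S ∈ convexHull ℝ {M | ∃ σ : Equiv.Perm (Fin n), σ.permMatrix ℝ = M} := by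
      rw [← doublyStochastic_eq_convexHull_permMatrix]
      exact hS
    exact convexHull_min hsub hconv hS'
  calc N (A.mulVec y) ≤ N (B.mulVec z) := step1
    _ ≤ N (S.mulVec z) := step2
    _ ≤ N z := step3
    _ = N y := hNzy
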